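/- Let f : Y ⟶ X be a morphism in the category TopCat of topological spaces such that the underlying function of f is surjective and f is a proper map. Then f is an effective descent morphism: the pullback functor Over.pullback f : Over X ⥤ Over Y is monadic. (This is the fact, used throughout the paper, that proper surjections are effective descent morphisms; here in its topological form.) -/

import Mathlib

set_option linter.unusedSectionVars false

open CategoryTheory CategoryTheory.Limits Filter Topology Function Set

universe u

section TopologyCore

variable {W Y X : Type u} [TopologicalSpace W] [TopologicalSpace Y] [TopologicalSpace X]

/-- The first projection of a (concrete) pullback of a proper map is proper. -/
lemma isProperMap_pb_fst (g : W → X) (hg : Continuous g) (f : Y → X) (hf : IsProperMap f) :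
    IsProperMap (fun z : {z : W × Y // g z.1 = f z.2} => z.1.1) := by
  rw [isProperMap_iff_ultrafilter]
  refine ⟨continuous_fst.comp continuous_subtype_val, ?_⟩
  intro 𝒰 w₀ hw
  have hsnd : Tendsto f (𝒰.map (fun z : {z : W × Y // g z.1 = f z.2} => z.1.2)) (𝓝 (g w₀)) := by
    rw [Ultrafilter.coe_map, Filter.tendsto_map'_iff]
    have : (f ∘ fun z : {z : W × Y // g z.1 = f z.2} => z.1.2)
        = fun z : {z : W × Y // g z.1 = f z.2} => g z.1.1 := by
      funext z; exact z.2.symm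
    rw [this]
    exact (hg.tendsto w₀).comp hw
  obtain ⟨y₀, hy₀, hconv⟩ := hf.ultrafilter_le_nhds_of_tendsto hsnd
  refine ⟨⟨(w₀, y₀), hy₀.symm⟩, rfl, ?_⟩
  have hval : Tendsto (fun z : {z : W × Y // g z.1 = f z.2} => (z : W × Y)) 𝒰 (𝓝 (w₀, y₀)) := by
    rw [nhds_prod_eq]
    rw [Filter.tendsto_prod_iff']
    exact ⟨hw, hconv⟩
  rw [nhds_subtype_eq_comap, ← Filter.map_le_iff_le_comap]
  exact hval

lemma isQuotientMap_pb_fst (g : W → X) (hg : Continuous g) (f : Y → X) (hf : IsProperMap f)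
    (hfs : Surjective f) :
    IsQuotientMap (fun z : {z : W × Y // g z.1 = f z.2} => z.1.1) := by
  have hp := isProperMap_pb_fst g hg f hf
  refine hp.isClosedMap.isQuotientMap hp.continuous ?_
  intro w
  obtain ⟨y, hy⟩ := hfs (g w)
  exact ⟨⟨(w, y), hy.symm⟩, rfl⟩

variable {f : Y → X} {p : W → Y}

/-- A "descent datum" on a space `p : W → Y` relative to `f : Y → X`:
an Eilenberg–Moore algebra structure for the monad induced by pullback along `f`. -/
structure DescentPkg (f : Y → X) (p : W → Y) : Type u where
  θ : {z : W × Y // f (p z.1) = f z.2} → W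
  cont : Continuous θ
  hp : ∀ z, p (θ z) = z.1.2
  hunit : ∀ w, θ ⟨(w, p w), rfl⟩ = w
  hassoc : ∀ (w : W) (y₁ y₂ : Y) (h₁ : f (p w) = f y₁) (h₂ : f y₁ = f y₂),
      θ ⟨(θ ⟨(w, y₁), h₁⟩, y₂), by rw [hp]; exact h₂⟩ = θ ⟨(w, y₂), h₁.trans h₂⟩

namespace DescentPkg

variable (D : DescentPkg f p)

/-- The descent equivalence relation: `w' ` is a translate of `w`. -/
def rel : W → W → Prop := fun w w' => ∃ (y : Y) (h : f (p w) = f y), D.θ ⟨(w, y), h⟩ = w'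

lemma rel_equivalence : Equivalence D.rel := by
  constructor
  · intro w; exact ⟨p w, rfl, D.hunit w⟩
  · rintro w w' ⟨y, h, rfl⟩
    refine ⟨p w, by rw [D.hp]; exact h.symm, ?_⟩
    have := D.hassoc w y (p w) h (by rw [← h])
    rw [this, D.hunit]
  · rintro w w' w'' ⟨y, h, rfl⟩ ⟨y', h', rfl⟩
    have h'' : f (p w) = f y' := by rw [D.hp] at h'; exact h.trans h'
    refine ⟨y', h'', ?_⟩
    rw [← D.hassoc w y y' h (by rw [D.hp] at h'; exact h')]

/-- The quotient space (the descended space). -/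
def Qs : Type u := Quot D.rel

instance : TopologicalSpace D.Qs := by unfold Qs; infer_instance

/-- Quotient map to the descended space. -/
def dmap : W → D.Qs := Quot.mk D.rel

lemma isQuotientMap_dmap : IsQuotientMap D.dmap := isQuotientMap_quot_mk

lemma dmap_surjective : Surjective D.dmap := Quot.mk_surjective

lemma dmap_eq_iff {w w' : W} : D.dmap w = D.dmap w' ↔ D.rel w w' := by
  constructor
  · intro h
    exact (D.rel_equivalence.eqvGen_iff).mp (Quot.eqvGen_exact h)
  · intro h; exact Quot.sound h

lemma dmap_theta (z : {z : W × Y // f (p z.1) = f z.2}) : D.dmap (D.θ z) = D.dmap z.1.1 := by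
  refine (D.dmap_eq_iff.mpr ?_)
  exact (D.rel_equivalence.symm ⟨z.1.2, z.2, by cases z; rfl⟩)

variable (hf : IsProperMap f) (hp : Continuous p)

/-- The structure map of the descended space. -/
def qA : D.Qs → X := Quot.lift (fun w => f (p w)) (by
  rintro w w' ⟨y, h, rfl⟩
  simp only [D.hp]
  exact h)

@[simp] lemma qA_dmap (w : W) : D.qA (D.dmap w) = f (p w) := rfl

lemma continuous_qA (hfc : Continuous f) (hp : Continuous p) : Continuous D.qA := by
  rw [D.isQuotientMap_dmap.continuous_iff]
  exact hfc.comp hp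

/-- Fibers of `dmap` (classes of the descent relation) are compact, as continuous
images of fibers of `f`. -/
lemma isCompact_fiber (hf : IsProperMap f) (hp : Continuous p) (w₀ : W) :
    IsCompact (D.dmap ⁻¹' {D.dmap w₀}) := by
  have hK : IsCompact {y : Y | f (p w₀) = f y} := by
    have : {y : Y | f (p w₀) = f y} = f ⁻¹' {f (p w₀)} := by
      ext y; simp [eq_comm]
    rw [this]
    exact hf.isCompact_preimage isCompact_singleton
  have himg : D.dmap ⁻¹' {D.dmap w₀}
      = (fun y : {y : Y // f (p w₀) = f y} => D.θ ⟨(w₀, y.1), y.2⟩) '' univ := by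
    ext w'
    simp only [mem_preimage, mem_singleton_iff, image_univ, mem_range]
    constructor
    · intro h
      obtain ⟨y, hy, hw⟩ := D.dmap_eq_iff.mp h.symm
      exact ⟨⟨y, hy⟩, hw⟩
    · rintro ⟨⟨y, hy⟩, rfl⟩
      exact (D.dmap_theta ⟨(w₀, y), hy⟩).trans rfl
  have : CompactSpace {y : Y // f (p w₀) = f y} := isCompact_iff_compactSpace.mp hK
  have hcont : Continuous (fun y : {y : Y // f (p w₀) = f y} => D.θ ⟨(w₀, y.1), y.2⟩) :=
    D.cont.comp (Continuous.subtype_mk (continuous_const.prodMk continuous_subtype_val) _)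
  rw [himg, image_univ]
  exact isCompact_range hcont

lemma theta_congr {z z' : {z : W × Y // f (p z.1) = f z.2}} (h : (z : W × Y) = (z' : W × Y)) :
    D.θ z = D.θ z' := by
  cases z; cases z'; cases h; rfl

/-- Key lifting lemma (uses properness of `f`): every ultrafilter converging in the
quotient admits a point of the fiber all whose open neighbourhoods have image in the
ultrafilter. -/
lemma pseudo_open (hf : IsProperMap f) (hpc : Continuous p)
    (𝔞 : Ultrafilter D.Qs) (a₀ : D.Qs) (h𝔞 : ↑𝔞 ≤ 𝓝 a₀) :
    ∃ w₁ : W, D.dmap w₁ = a₀ ∧ ∀ O : Set W, IsOpen O → w₁ ∈ O → D.dmap '' O ∈ 𝔞 := by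
  by_contra hcon
  push_neg at hcon
  obtain ⟨w₀, hw₀⟩ := D.dmap_surjective a₀
  have fibval : ∀ w₁ : D.dmap ⁻¹' {a₀}, ∃ O : Set W, IsOpen O ∧ (w₁ : W) ∈ O ∧ D.dmap '' O ∉ 𝔞 :=
    fun w₁ => hcon w₁ w₁.2
  choose O hOopen hOmem hOnot using fibval
  have hKc : IsCompact (D.dmap ⁻¹' {a₀}) := by
    rw [← hw₀]; exact D.isCompact_fiber hf hpc w₀
  have hcover : D.dmap ⁻¹' {a₀} ⊆ ⋃ w₁ : D.dmap ⁻¹' {a₀}, O w₁ :=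
    fun w hw => mem_iUnion.mpr ⟨⟨w, hw⟩, hOmem ⟨w, hw⟩⟩
  obtain ⟨t, ht⟩ := hKc.elim_finite_subcover O hOopen hcover
  set G : Set W := ⋃ w₁ ∈ t, O w₁ with hG
  have hGopen : IsOpen G := isOpen_biUnion (fun i _ => hOopen i)
  have hGnot : D.dmap '' G ∉ 𝔞 := by
    have himg : D.dmap '' G = ⋃ w₁ ∈ (t : Set (D.dmap ⁻¹' {a₀})), D.dmap '' O w₁ := by
      rw [hG]; rw [image_iUnion₂]; simp
    rw [himg]
    intro hmem
    rcases (Ultrafilter.finite_biUnion_mem_iff (t.finite_toSet)).mp hmem with ⟨i, _, hi⟩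
    exact hOnot i hi
  set M : Set D.Qs := {a | D.dmap ⁻¹' {a} ⊆ G} with hM
  have hpre : D.dmap ⁻¹' M
      = ((fun z : {z : W × Y // f (p z.1) = f z.2} => z.1.1) '' (D.θ ⁻¹' Gᶜ))ᶜ := by
    ext w
    simp only [mem_preimage, mem_compl_iff, mem_image, hM, mem_setOf_eq]
    constructor
    · rintro hsub ⟨z, hz, hzw⟩
      refine hz ?_
      refine hsub ?_
      have : D.dmap (D.θ z) = D.dmap z.1.1 := D.dmap_theta z
      rw [mem_preimage, mem_singleton_iff, this, hzw]
    · intro hnot w' hw'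
      rw [mem_preimage, mem_singleton_iff] at hw'
      by_contra hw'G
      obtain ⟨y, h, hy⟩ := D.dmap_eq_iff.mp hw'.symm
      refine hnot ⟨⟨(w, y), h⟩, ?_, rfl⟩
      show D.θ ⟨(w, y), h⟩ ∈ Gᶜ
      rw [hy]; exact hw'G
  have hMopen : IsOpen M := by
    rw [← D.isQuotientMap_dmap.isOpen_preimage, hpre]
    exact ((isProperMap_pb_fst (fun w => f (p w)) (hf.continuous.comp hpc) f hf).isClosedMap
      _ ((hGopen.isClosed_compl).preimage D.cont)).isOpen_compl
  have ha₀M : a₀ ∈ M := by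
    rw [hM, mem_setOf_eq]
    intro w hw
    exact ht hw
  have hMmem : M ∈ 𝔞 := h𝔞 (hMopen.mem_nhds ha₀M)
  refine hGnot (Filter.mem_of_superset hMmem ?_)
  intro a ha
  obtain ⟨w, hw⟩ := D.dmap_surjective a
  exact ⟨w, ha (by rw [mem_preimage, hw]; rfl), hw⟩

/-- The comparison map to the pullback of the descended space. -/
def Φ : W → {z : D.Qs × Y // D.qA z.1 = f z.2} := fun w => ⟨(D.dmap w, p w), rfl⟩

lemma continuous_Φ (hpc : Continuous p) : Continuous D.Φ :=
  Continuous.subtype_mk ((D.isQuotientMap_dmap.continuous).prodMk hpc) _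

lemma Φ_injective : Injective D.Φ := by
  intro w w' h
  have h1 : D.dmap w = D.dmap w' :=
    congrArg (fun e : {z : D.Qs × Y // D.qA z.1 = f z.2} => e.1.1) h
  have h2 : p w = p w' :=
    congrArg (fun e : {z : D.Qs × Y // D.qA z.1 = f z.2} => e.1.2) h
  obtain ⟨y, hy, hw⟩ := D.dmap_eq_iff.mp h1
  have h3 : p w' = y := by rw [← hw]; exact D.hp ⟨(w, y), hy⟩
  have hpy : y = p w := h3.symm.trans h2.symm
  subst hpy
  rw [← hw]
  exact (D.hunit w).symm

lemma Φ_surjective : Surjective D.Φ := by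
  rintro ⟨⟨a, y⟩, hcond⟩
  obtain ⟨w, rfl⟩ := D.dmap_surjective a
  have hc : f (p w) = f y := hcond
  refine ⟨D.θ ⟨(w, y), hc⟩, ?_⟩
  refine Subtype.ext (Prod.ext ?_ ?_)
  · exact D.dmap_theta ⟨(w, y), hc⟩
  · exact D.hp ⟨(w, y), hc⟩

lemma isOpenMap_Φ (hf : IsProperMap f) (hpc : Continuous p) : IsOpenMap D.Φ := by
  intro W₀ hW₀
  rw [isOpen_iff_ultrafilter]
  rintro e₀ ⟨w₂, hw₂W₀, rfl⟩ 𝒰 h𝒰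
  set projA : {z : D.Qs × Y // D.qA z.1 = f z.2} → D.Qs := fun e => e.1.1 with hprojA_def
  have hprojA : Continuous projA := continuous_fst.comp continuous_subtype_val
  have h𝔞 : ↑(𝒰.map projA) ≤ 𝓝 (D.dmap w₂) := by
    have : Tendsto projA ↑𝒰 (𝓝 (projA (D.Φ w₂))) := (hprojA.tendsto _).mono_left h𝒰
    exact this
  obtain ⟨w₁, hw₁a, hw₁lift⟩ := D.pseudo_open hf hpc (𝒰.map projA) (D.dmap w₂) h𝔞
  have hww : f (p w₁) = f (p w₂) := by
    have := congrArg D.qA hw₁a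
    simpa using this
  have hkey : D.θ ⟨(w₁, p w₂), hww⟩ = w₂ := by
    obtain ⟨y, h, hy⟩ := D.dmap_eq_iff.mp hw₁a
    have h3 : p w₂ = y := by rw [← hy]; exact D.hp ⟨(w₁, y), h⟩
    have h2 : f y = f (p w₂) := congrArg f h3.symm
    have hassoc := D.hassoc w₁ y (p w₂) h h2
    have e1 : D.θ ⟨(D.θ ⟨(w₁, y), h⟩, p w₂), by rw [D.hp]; exact h2⟩
        = D.θ ⟨(w₂, p w₂), rfl⟩ :=
      D.theta_congr (show ((D.θ ⟨(w₁, y), h⟩, p w₂) : W × Y) = (w₂, p w₂) by rw [hy])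
    exact (hassoc.symm.trans e1).trans (D.hunit w₂)
  have hopen : IsOpen (D.θ ⁻¹' W₀) := hW₀.preimage D.cont
  obtain ⟨V, hVopen, hVeq⟩ := isOpen_induced_iff.mp hopen
  have hVmem : (w₁, p w₂) ∈ V := by
    have : (⟨(w₁, p w₂), hww⟩ : {z : W × Y // f (p z.1) = f z.2}) ∈ D.θ ⁻¹' W₀ := by
      rw [mem_preimage, hkey]; exact hw₂W₀
    rw [← hVeq] at this
    exact this
  obtain ⟨OW, OY, hOW, hOY, hw₁OW, hyOY, hboxsub⟩ := isOpen_prod_iff.mp hVopen w₁ (p w₂) hVmem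
  have h1 : projA ⁻¹' (D.dmap '' OW) ∈ 𝒰 := by
    have := hw₁lift OW hOW hw₁OW
    rwa [Ultrafilter.mem_map] at this
  have h2 : (fun e : {z : D.Qs × Y // D.qA z.1 = f z.2} => e.1.2) ⁻¹' OY ∈ 𝒰 := by
    refine h𝒰 ?_
    have hc : Continuous (fun e : {z : D.Qs × Y // D.qA z.1 = f z.2} => e.1.2) :=
      continuous_snd.comp continuous_subtype_val
    exact (hOY.preimage hc).mem_nhds (by exact hyOY)
  refine Filter.mem_of_superset (Filter.inter_mem h1 h2) ?_
  rintro ⟨⟨a, y⟩, hcond⟩ ⟨he1, he2⟩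
  have he1' : a ∈ D.dmap '' OW := he1
  have he2' : y ∈ OY := he2
  obtain ⟨w₃, hw₃OW, hw₃a⟩ := he1'
  have hc3 : f (p w₃) = f y := by
    have : D.qA a = f y := hcond
    rw [← hw₃a] at this
    simpa using this
  have hbox : ((w₃, y) : W × Y) ∈ V := hboxsub ⟨hw₃OW, he2'⟩
  have hζ : D.θ ⟨(w₃, y), hc3⟩ ∈ W₀ := by
    have : (⟨(w₃, y), hc3⟩ : {z : W × Y // f (p z.1) = f z.2}) ∈ Subtype.val ⁻¹' V := hbox
    rw [hVeq] at this
    exact this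
  refine ⟨D.θ ⟨(w₃, y), hc3⟩, hζ, ?_⟩
  refine Subtype.ext (Prod.ext ?_ ?_)
  · exact (D.dmap_theta ⟨(w₃, y), hc3⟩).trans hw₃a
  · exact D.hp ⟨(w₃, y), hc3⟩

/-- The comparison homeomorphism `W ≃ₜ Qs ×_X Y`. -/
noncomputable def homeoΦ (hf : IsProperMap f) (hpc : Continuous p) :
    W ≃ₜ {z : D.Qs × Y // D.qA z.1 = f z.2} :=
  Equiv.toHomeomorphOfContinuousOpen
    (Equiv.ofBijective D.Φ ⟨D.Φ_injective, D.Φ_surjective⟩)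
    (D.continuous_Φ hpc) (D.isOpenMap_Φ hf hpc)

@[simp] lemma homeoΦ_apply (hf : IsProperMap f) (hpc : Continuous p) (w : W) :
    (D.homeoΦ hf hpc w : D.Qs × Y) = (D.dmap w, p w) := rfl

end DescentPkg
end TopologyCore

section CategoryGlue

open TopCat

variable {Y X : TopCat.{u}} (f : Y ⟶ X)

/-- Points of a topological pullback are determined by their two projections. -/
lemma pb_ext {A B C : TopCat.{u}} (g : A ⟶ C) (h : B ⟶ C) {z z' : ↑(pullback g h)}
    (h1 : pullback.fst g h z = pullback.fst g h z')
    (h2 : pullback.snd g h z = pullback.snd g h z') : z = z' := by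
  have hinj : Function.Injective (pullbackIsoProdSubtype g h).hom :=
    (TopCat.homeoOfIso (pullbackIsoProdSubtype g h)).injective
  apply hinj
  apply Subtype.ext
  apply Prod.ext
  · have e1 := ConcreteCategory.congr_hom (pullbackIsoProdSubtype_hom_fst g h) z
    have e2 := ConcreteCategory.congr_hom (pullbackIsoProdSubtype_hom_fst g h) z'
    simp only [comp_app] at e1 e2
    exact e1.trans (h1.trans e2.symm)
  · have e1 := ConcreteCategory.congr_hom (pullbackIsoProdSubtype_hom_snd g h) z
    have e2 := ConcreteCategory.congr_hom (pullbackIsoProdSubtype_hom_snd g h) z'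
    simp only [comp_app] at e1 e2
    exact e1.trans (h2.trans e2.symm)

/-- Construct a point of a topological pullback from matching data. -/
noncomputable def pbMk {A B C : TopCat.{u}} (g : A ⟶ C) (h : B ⟶ C) (a : A) (b : B)
    (hc : g a = h b) : ↑(pullback g h) :=
  (pullbackIsoProdSubtype g h).inv ⟨(a, b), hc⟩

@[simp] lemma pbMk_fst {A B C : TopCat.{u}} (g : A ⟶ C) (h : B ⟶ C) (a : A) (b : B)
    (hc : g a = h b) : pullback.fst g h (pbMk g h a b hc) = a :=
  pullbackIsoProdSubtype_inv_fst_apply g h ⟨(a, b), hc⟩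

@[simp] lemma pbMk_snd {A B C : TopCat.{u}} (g : A ⟶ C) (h : B ⟶ C) (a : A) (b : B)
    (hc : g a = h b) : pullback.snd g h (pbMk g h a b hc) = b :=
  pullbackIsoProdSubtype_inv_snd_apply g h ⟨(a, b), hc⟩

lemma pb_cond_apply {A B C : TopCat.{u}} (g : A ⟶ C) (h : B ⟶ C) (z : ↑(pullback g h)) :
    g (pullback.fst g h z) = h (pullback.snd g h z) :=
  ConcreteCategory.congr_hom (pullback.condition (f := g) (g := h)) z

lemma pb_point_eq {A B C : TopCat.{u}} (g : A ⟶ C) (h : B ⟶ C) (z : ↑(pullback g h)) :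
    z = pbMk g h (pullback.fst g h z) (pullback.snd g h z)
      (pb_cond_apply g h z) := by
  apply pb_ext <;> simp

/-- The first projection of a pullback of a proper map, in `TopCat`. -/
lemma fst_properMap {A : TopCat.{u}} (g : A ⟶ X) (hf : IsProperMap (f : Y → X)) :
    IsProperMap ((pullback.fst g f : pullback g f ⟶ A) : ↑(pullback g f) → A) := by
  have key : IsProperMap (fun z : {z : ↑A × ↑Y // g z.1 = f z.2} => z.1.1) :=
    isProperMap_pb_fst (g : A → X) g.hom.continuous (f : Y → X) hf
  have : (pullback.fst g f : ↑(pullback g f) → A)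
      = (fun z : {z : ↑A × ↑Y // g z.1 = f z.2} => z.1.1)
        ∘ (TopCat.homeoOfIso (pullbackIsoProdSubtype g f)) := by
    funext z
    simp only [Function.comp_apply]
    have e1 := ConcreteCategory.congr_hom (pullbackIsoProdSubtype_hom_fst g f) z
    simp only [comp_app] at e1
    exact e1.symm
  rw [this]
  exact key.comp (TopCat.homeoOfIso (pullbackIsoProdSubtype g f)).isProperMap

lemma fst_surjective {A : TopCat.{u}} (g : A ⟶ X) (hfs : Function.Surjective f) :
    Function.Surjective ((pullback.fst g f : pullback g f ⟶ A) : ↑(pullback g f) → A) := by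
  intro a
  obtain ⟨y, hy⟩ := hfs (g a)
  exact ⟨pbMk g f a y hy.symm, by simp⟩

lemma fst_quotientMap {A : TopCat.{u}} (g : A ⟶ X) (hf : IsProperMap (f : Y → X))
    (hfs : Function.Surjective f) :
    IsQuotientMap ((pullback.fst g f : pullback g f ⟶ A) : ↑(pullback g f) → A) :=
  (fst_properMap f g hf).isClosedMap.isQuotientMap (fst_properMap f g hf).continuous
    (fst_surjective f g hfs)

/-- `Over.pullback f` is faithful when `f` is surjective. -/
lemma overPullback_faithful (hfs : Function.Surjective f) : (Over.pullback f).Faithful := by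
  constructor
  intro A₁ A₂ w w' hww
  ext1
  have h1 : pullback.lift (pullback.fst A₁.hom f ≫ w.left) (pullback.snd A₁.hom f)
        (by simp [pullback.condition]) ≫ pullback.fst A₂.hom f
      = pullback.lift (pullback.fst A₁.hom f ≫ w'.left) (pullback.snd A₁.hom f)
        (by simp [pullback.condition]) ≫ pullback.fst A₂.hom f := by
    have := congrArg CommaMorphism.left hww
    simp only [Over.pullback_map_left] at this
    rw [this]
  rw [pullback.lift_fst, pullback.lift_fst] at h1
  have hepi : Epi (pullback.fst A₁.hom f) :=
    (TopCat.epi_iff_surjective _).mpr (fst_surjective f A₁.hom hfs)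
  exact (cancel_epi (pullback.fst A₁.hom f)).mp h1

/-- Pointwise description of the functorial action of `Over.pullback f`. -/
lemma pullback_map_apply {B₁ B₂ : Over X} (k : B₁ ⟶ B₂) (a : ↑B₁.left) (y : ↑Y)
    (c : B₁.hom a = f y) :
    ((Over.pullback f).map k).left (pbMk B₁.hom f a y c)
      = pbMk B₂.hom f (k.left a) y
        ((ConcreteCategory.congr_hom (Over.w k) a).trans c) := by
  apply pb_ext
  · have h1 : ((Over.pullback f).map k).left ≫ pullback.fst B₂.hom f
        = pullback.fst B₁.hom f ≫ k.left := by
      simp [Over.pullback_map_left]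
      exact pullback.lift_fst _ _ _
    have h2 : pullback.fst B₂.hom f (((Over.pullback f).map k).left (pbMk B₁.hom f a y c))
        = k.left (pullback.fst B₁.hom f (pbMk B₁.hom f a y c)) :=
      ConcreteCategory.congr_hom h1 (pbMk B₁.hom f a y c)
    rw [h2, pbMk_fst, pbMk_fst]
  · have h1 : ((Over.pullback f).map k).left ≫ pullback.snd B₂.hom f
        = pullback.snd B₁.hom f := by
      simp [Over.pullback_map_left]
      exact pullback.lift_snd _ _ _
    have h2 : pullback.snd B₂.hom f (((Over.pullback f).map k).left (pbMk B₁.hom f a y c))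
        = pullback.snd B₁.hom f (pbMk B₁.hom f a y c) :=
      ConcreteCategory.congr_hom h1 (pbMk B₁.hom f a y c)
    rw [h2, pbMk_snd, pbMk_snd]

/-- Pointwise description of the unit of the adjunction. -/
lemma unit_left_apply (W' : Over Y) (w : ↑W'.left) :
    (((Over.mapPullbackAdj f).unit.app W').left) w
      = pbMk (W'.hom ≫ f) f w (W'.hom w) rfl := by
  apply pb_ext
  · have h1 : ((Over.mapPullbackAdj f).unit.app W').left ≫ pullback.fst (W'.hom ≫ f) f
        = 𝟙 W'.left := by
      simp [Over.mapPullbackAdj_unit_app]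
      exact pullback.lift_fst _ _ _
    have h2 : pullback.fst (W'.hom ≫ f) f (((Over.mapPullbackAdj f).unit.app W').left w)
        = w := ConcreteCategory.congr_hom h1 w
    exact h2.trans (pbMk_fst _ _ _ _ _).symm
  · have h1 : ((Over.mapPullbackAdj f).unit.app W').left ≫ pullback.snd (W'.hom ≫ f) f
        = W'.hom := by
      simp [Over.mapPullbackAdj_unit_app]
      exact pullback.lift_snd _ _ _
    have h2 : pullback.snd (W'.hom ≫ f) f (((Over.mapPullbackAdj f).unit.app W').left w)
        = W'.hom w := ConcreteCategory.congr_hom h1 w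
    exact h2.trans (pbMk_snd _ _ _ _ _).symm

/-- The action of a comparison algebra, pointwise. -/
lemma comparison_a_apply (A₂ : Over X) (ξ : ↑(pullback A₂.hom f)) (y : ↑Y)
    (c : (pullback.snd A₂.hom f ≫ f) ξ = f y) :
    (((Monad.comparison (Over.mapPullbackAdj f)).obj A₂).a.left)
        (pbMk (pullback.snd A₂.hom f ≫ f) f ξ y c)
      = pbMk A₂.hom f (pullback.fst A₂.hom f ξ) y
          (by rw [pb_cond_apply A₂.hom f ξ]; exact c) := by
  have ha : ((Monad.comparison (Over.mapPullbackAdj f)).obj A₂).a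
      = (Over.pullback f).map ((Over.mapPullbackAdj f).counit.app A₂) := rfl
  have := pullback_map_apply f ((Over.mapPullbackAdj f).counit.app A₂) ξ y c
  rw [ha]
  refine this.trans ?_
  have hcl : ((Over.mapPullbackAdj f).counit.app A₂).left ξ = pullback.fst A₂.hom f ξ := by
    have h9 : ((Over.mapPullbackAdj f).counit.app A₂).left = pullback.fst A₂.hom f := by
      simp [Over.mapPullbackAdj_counit_app]
    exact congrFun (congrArg (fun (t : pullback A₂.hom f ⟶ A₂.left) => (t : _ → _)) h9) ξ
  apply pb_ext
  · exact (pbMk_fst _ _ _ _ _).trans (hcl.trans (pbMk_fst _ _ _ _ _).symm)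
  · exact (pbMk_snd _ _ _ _ _).trans (pbMk_snd _ _ _ _ _).symm

/-- The comparison functor is full. -/
lemma comparison_full (hf : IsProperMap (f : Y → X)) (hfs : Function.Surjective f) :
    (Monad.comparison (Over.mapPullbackAdj f)).Full := by
  constructor
  intro A₁ A₂ φ
  have hq : IsQuotientMap ((pullback.fst A₁.hom f : pullback A₁.hom f ⟶ A₁.left)
      : ↑(pullback A₁.hom f) → A₁.left) := fst_quotientMap f A₁.hom hf hfs
  have hsnd : ∀ z : ↑(pullback A₁.hom f),
      pullback.snd A₂.hom f (φ.f.left z) = pullback.snd A₁.hom f z := by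
    intro z
    exact ConcreteCategory.congr_hom (Over.w φ.f) z
  have hkey : ∀ z z' : ↑(pullback A₁.hom f), pullback.fst A₁.hom f z = pullback.fst A₁.hom f z' →
      pullback.fst A₂.hom f (φ.f.left z) = pullback.fst A₂.hom f (φ.f.left z') := by
    intro z z' hzz
    have hcond : (pullback.snd A₁.hom f ≫ f) z = f (pullback.snd A₁.hom f z') := by
      have c1 := pb_cond_apply A₁.hom f z
      have c2 := pb_cond_apply A₁.hom f z'
      show f (pullback.snd A₁.hom f z) = f (pullback.snd A₁.hom f z')
      exact c1.symm.trans ((congrArg (fun t => A₁.hom t) hzz).trans c2)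
    set ζ := pbMk (pullback.snd A₁.hom f ≫ f) f z (pullback.snd A₁.hom f z') hcond with hζ
    have hpt : (((Monad.comparison (Over.mapPullbackAdj f)).obj A₂).a.left)
          (((Over.mapPullbackAdj f).toMonad.map φ.f).left ζ)
        = φ.f.left ((((Monad.comparison (Over.mapPullbackAdj f)).obj A₁).a.left) ζ) :=
      ConcreteCategory.congr_hom (congrArg CommaMorphism.left φ.h) ζ
    have hcond2 : (pullback.snd A₂.hom f ≫ f) (φ.f.left z) = f (pullback.snd A₁.hom f z') := by
      show f (pullback.snd A₂.hom f (φ.f.left z)) = f (pullback.snd A₁.hom f z')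
      exact (congrArg (fun t => f t) (hsnd z)).trans hcond
    have step1 : (((Over.mapPullbackAdj f).toMonad.map φ.f).left) ζ
        = pbMk (pullback.snd A₂.hom f ≫ f) f (φ.f.left z) (pullback.snd A₁.hom f z') hcond2 :=
      (pullback_map_apply f ((Over.map f).map φ.f) z (pullback.snd A₁.hom f z') hcond).trans
        (by apply pb_ext
            · exact (pbMk_fst _ _ _ _ _).trans (pbMk_fst _ _ _ _ _).symm
            · exact (pbMk_snd _ _ _ _ _).trans (pbMk_snd _ _ _ _ _).symm)
    have eqL : (((Monad.comparison (Over.mapPullbackAdj f)).obj A₂).a.left)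
          ((((Over.mapPullbackAdj f).toMonad.map φ.f).left) ζ)
        = pbMk A₂.hom f (pullback.fst A₂.hom f (φ.f.left z)) (pullback.snd A₁.hom f z')
            (by rw [pb_cond_apply A₂.hom f (φ.f.left z)]; exact hcond2) :=
      (congrArg (fun t => (((Monad.comparison (Over.mapPullbackAdj f)).obj A₂).a.left) t)
        step1).trans
        (comparison_a_apply f A₂ (φ.f.left z) (pullback.snd A₁.hom f z') hcond2)
    have step3 : (((Monad.comparison (Over.mapPullbackAdj f)).obj A₁).a.left) ζ
        = pbMk A₁.hom f (pullback.fst A₁.hom f z) (pullback.snd A₁.hom f z')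
            (by rw [pb_cond_apply A₁.hom f z]; exact hcond) :=
      comparison_a_apply f A₁ z (pullback.snd A₁.hom f z') hcond
    have step4 : pbMk A₁.hom f (pullback.fst A₁.hom f z) (pullback.snd A₁.hom f z')
        (by rw [pb_cond_apply A₁.hom f z]; exact hcond) = z' := by
      apply pb_ext
      · exact (pbMk_fst _ _ _ _ _).trans hzz
      · exact pbMk_snd _ _ _ _ _
    have eqR : φ.f.left ((((Monad.comparison (Over.mapPullbackAdj f)).obj A₁).a.left) ζ)
        = φ.f.left z' := congrArg (fun t => φ.f.left t) (step3.trans step4)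
    have combined := eqL.symm.trans (hpt.trans eqR)
    exact (pbMk_fst _ _ _ _ _).symm.trans
      (congrArg (fun t => pullback.fst A₂.hom f t) combined)
  choose σ hσ using fst_surjective f A₁.hom hfs
  have hcomm : ∀ z : ↑(pullback A₁.hom f),
      pullback.fst A₂.hom f (φ.f.left (σ (pullback.fst A₁.hom f z)))
        = pullback.fst A₂.hom f (φ.f.left z) :=
    fun z => hkey (σ (pullback.fst A₁.hom f z)) z (hσ _)
  have hcont : Continuous (fun a : ↑A₁.left => pullback.fst A₂.hom f (φ.f.left (σ a))) := by
    rw [hq.continuous_iff]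
    have : (fun a : ↑A₁.left => pullback.fst A₂.hom f (φ.f.left (σ a)))
        ∘ (pullback.fst A₁.hom f : pullback A₁.hom f ⟶ A₁.left)
        = fun z => pullback.fst A₂.hom f (φ.f.left z) := funext hcomm
    rw [this]
    exact (pullback.fst A₂.hom f).hom.continuous.comp
      ((φ.f.left : _ ⟶ _).hom.continuous)
  set φ₀ : A₁.left ⟶ A₂.left := TopCat.ofHom ⟨fun a => pullback.fst A₂.hom f (φ.f.left (σ a)), hcont⟩ with hφ₀
  have hover : φ₀ ≫ A₂.hom = A₁.hom := by
    apply TopCat.ext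
    intro a
    show A₂.hom (pullback.fst A₂.hom f (φ.f.left (σ a))) = A₁.hom a
    exact (pb_cond_apply A₂.hom f (φ.f.left (σ a))).trans
      ((congrArg (fun t => f t) (hsnd (σ a))).trans
        ((pb_cond_apply A₁.hom f (σ a)).symm.trans (congrArg (fun t => A₁.hom t) (hσ a))))
  refine ⟨Over.homMk φ₀ hover, ?_⟩
  apply Monad.Algebra.Hom.ext
  show (Over.pullback f).map (Over.homMk φ₀ hover) = φ.f
  ext1
  apply pullback.hom_ext
  · refine Eq.trans (pullback.lift_fst _ _ _) ?_
    apply TopCat.ext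
    intro z
    show φ₀ (pullback.fst A₁.hom f z) = (φ.f.left ≫ pullback.fst A₂.hom f) z
    exact hcomm z
  · refine Eq.trans (pullback.lift_snd _ _ _) ?_
    show pullback.snd A₁.hom f = φ.f.left ≫ pullback.snd A₂.hom f
    apply TopCat.ext
    intro z
    exact (hsnd z).symm

lemma iso_hom_point {A B C : TopCat.{u}} (g : A ⟶ C) (h : B ⟶ C) (ξ : ↑(pullback g h)) :
    (pullbackIsoProdSubtype g h).hom ξ
      = ⟨(pullback.fst g h ξ, pullback.snd g h ξ), pb_cond_apply g h ξ⟩ := by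
  apply Subtype.ext
  apply Prod.ext
  · exact ConcreteCategory.congr_hom (pullbackIsoProdSubtype_hom_fst g h) ξ
  · exact ConcreteCategory.congr_hom (pullbackIsoProdSubtype_hom_snd g h) ξ

/-- The comparison functor is essentially surjective. -/
lemma comparison_essSurj (hf : IsProperMap (f : Y → X)) :
    (Monad.comparison (Over.mapPullbackAdj f)).EssSurj := by
  constructor
  intro S
  set W' : Over Y := S.A with hW'def
  -- the concrete algebra structure map
  set θfun : {z : (↑W'.left : Type u) × (↑Y : Type u) // f (W'.hom z.1) = f z.2} → ↑W'.left :=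
    fun z => S.a.left (pbMk ((Over.map f).obj W').hom f z.1.1 z.1.2 (by exact z.2)) with hθfun
  have θcont : Continuous θfun := by
    refine (S.a.left.hom.continuous).comp ?_
    have : Continuous fun z : {z : (↑W'.left : Type u) × (↑Y : Type u) // f (W'.hom z.1) = f z.2}
        => (⟨z.1, by exact z.2⟩
            : {p : ↑W'.left × ↑Y // ((Over.map f).obj W').hom p.1 = f p.2}) :=
      Continuous.subtype_mk continuous_subtype_val (fun z => by exact z.2)
    exact ((pullbackIsoProdSubtype ((Over.map f).obj W').hom f).inv.hom.continuous).comp this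
  have hpfield : ∀ z, W'.hom (θfun z) = z.1.2 := by
    intro z
    have h1 : W'.hom (S.a.left (pbMk ((Over.map f).obj W').hom f z.1.1 z.1.2 (by exact z.2)))
        = pullback.snd ((Over.map f).obj W').hom f
            (pbMk ((Over.map f).obj W').hom f z.1.1 z.1.2 (by exact z.2)) :=
      ConcreteCategory.congr_hom (Over.w S.a) _
    exact h1.trans (pbMk_snd _ _ _ _ _)
  have hunitfield : ∀ w : ↑W'.left, θfun ⟨(w, W'.hom w), rfl⟩ = w := by
    intro w
    have hupt : S.a.left (((Over.mapPullbackAdj f).unit.app W').left w) = w :=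
      ConcreteCategory.congr_hom (congrArg CommaMorphism.left S.unit) w
    exact (congrArg (fun t => S.a.left t) (unit_left_apply f W' w).symm).trans hupt
  have hassocfield : ∀ (w : ↑W'.left) (y₁ y₂ : ↑Y) (h₁ : f (W'.hom w) = f y₁)
      (h₂ : f y₁ = f y₂),
      θfun ⟨(θfun ⟨(w, y₁), h₁⟩, y₂), by rw [hpfield]; exact h₂⟩
        = θfun ⟨(w, y₂), h₁.trans h₂⟩ := by
    intro w y₁ y₂ h₁ h₂
    set ζ₁ := pbMk ((Over.map f).obj W').hom f w y₁ (by exact h₁) with hζ₁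
    have c₂ : ((Over.map f).obj ((Over.mapPullbackAdj f).toMonad.obj W')).hom ζ₁ = f y₂ := by
      show f (pullback.snd ((Over.map f).obj W').hom f ζ₁) = f y₂
      exact (congrArg (fun t => f t) (pbMk_snd _ _ _ _ _)).trans h₂
    set ζ₂ := pbMk ((Over.map f).obj ((Over.mapPullbackAdj f).toMonad.obj W')).hom f ζ₁ y₂ c₂
      with hζ₂
    have hpt : S.a.left (((Over.mapPullbackAdj f).toMonad.map S.a).left ζ₂)
        = S.a.left (((Over.mapPullbackAdj f).toMonad.μ.app W').left ζ₂) :=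
      (ConcreteCategory.congr_hom (congrArg CommaMorphism.left S.assoc) ζ₂).symm
    have step1 : (((Over.mapPullbackAdj f).toMonad.map S.a).left) ζ₂
        = pbMk ((Over.map f).obj W').hom f (S.a.left ζ₁) y₂
            ((ConcreteCategory.congr_hom (Over.w ((Over.map f).map S.a)) ζ₁).trans c₂) :=
      pullback_map_apply f ((Over.map f).map S.a) ζ₁ y₂ c₂
    have step2 : (((Over.mapPullbackAdj f).toMonad.μ.app W').left) ζ₂
        = pbMk ((Over.map f).obj W').hom f
            (pullback.fst ((Over.map f).obj W').hom f ζ₁) y₂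
            (by rw [pb_cond_apply ((Over.map f).obj W').hom f ζ₁]; exact c₂) :=
      comparison_a_apply f ((Over.map f).obj W') ζ₁ y₂ c₂
    have step3 : pbMk ((Over.map f).obj W').hom f
            (pullback.fst ((Over.map f).obj W').hom f ζ₁) y₂
            (by rw [pb_cond_apply ((Over.map f).obj W').hom f ζ₁]; exact c₂)
        = pbMk ((Over.map f).obj W').hom f w y₂ (by exact h₁.trans h₂) := by
      apply pb_ext
      · exact (pbMk_fst _ _ _ _ _).trans ((pbMk_fst _ _ _ _ _).trans (pbMk_fst _ _ _ _ _).symm)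
      · exact (pbMk_snd _ _ _ _ _).trans (pbMk_snd _ _ _ _ _).symm
    have eqL : θfun ⟨(θfun ⟨(w, y₁), h₁⟩, y₂), by rw [hpfield]; exact h₂⟩
        = S.a.left (((Over.mapPullbackAdj f).toMonad.map S.a).left ζ₂) :=
      congrArg (fun t => S.a.left t) step1.symm
    have eqR : S.a.left (((Over.mapPullbackAdj f).toMonad.μ.app W').left ζ₂)
        = θfun ⟨(w, y₂), h₁.trans h₂⟩ :=
      congrArg (fun t => S.a.left t) (step2.trans step3)
    exact eqL.trans (hpt.trans eqR)
  -- the descent package and the descended object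
  set D : DescentPkg (f : Y → X) (W'.hom : W'.left → Y) :=
    { θ := θfun, cont := θcont, hp := hpfield, hunit := hunitfield, hassoc := hassocfield }
    with hD
  set qhom : TopCat.of D.Qs ⟶ X :=
    TopCat.ofHom ⟨D.qA, D.continuous_qA f.hom.continuous W'.hom.hom.continuous⟩ with hqhom
  set Abar : Over X := Over.mk qhom with hAbar
  set e := D.homeoΦ hf W'.hom.hom.continuous with he
  -- maps back and forth
  set symmMap : TopCat.of {p : (↑(TopCat.of D.Qs) : Type u) × (↑Y : Type u) // Abar.hom p.1 = f p.2}
      ⟶ W'.left :=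
    TopCat.ofHom ⟨fun z => e.symm ⟨(z.1.1, z.1.2), (by exact z.2)⟩,
      e.symm.continuous.comp
        (Continuous.subtype_mk continuous_subtype_val (fun z => by exact z.2))⟩ with hsymmMap
  set ψ : ((Over.pullback f).obj Abar).left ⟶ W'.left :=
    (pullbackIsoProdSubtype Abar.hom f).hom ≫ symmMap with hψdef
  have hψval : ∀ ξ : ↑(pullback Abar.hom f),
      ψ ξ = e.symm ⟨(pullback.fst Abar.hom f ξ, pullback.snd Abar.hom f ξ),
        (by exact pb_cond_apply Abar.hom f ξ)⟩ := by
    intro ξ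
    show symmMap ((pullbackIsoProdSubtype Abar.hom f).hom ξ) = _
    rw [iso_hom_point]
    rfl
  have hψ1 : ∀ ξ : ↑(pullback Abar.hom f), D.dmap (ψ ξ) = pullback.fst Abar.hom f ξ := by
    intro ξ
    rw [hψval ξ]
    exact congrArg
      (fun t : {z : D.Qs × (↑Y : Type u) // D.qA z.1 = f z.2} => (t : D.Qs × (↑Y : Type u)).1)
      (e.apply_symm_apply ⟨(pullback.fst Abar.hom f ξ, pullback.snd Abar.hom f ξ),
        (by exact pb_cond_apply Abar.hom f ξ)⟩)
  have hψ2 : ∀ ξ : ↑(pullback Abar.hom f), W'.hom (ψ ξ) = pullback.snd Abar.hom f ξ := by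
    intro ξ
    rw [hψval ξ]
    exact congrArg
      (fun t : {z : D.Qs × (↑Y : Type u) // D.qA z.1 = f z.2} => (t : D.Qs × (↑Y : Type u)).2)
      (e.apply_symm_apply ⟨(pullback.fst Abar.hom f ξ, pullback.snd Abar.hom f ξ),
        (by exact pb_cond_apply Abar.hom f ξ)⟩)
  -- the inverse morphism
  set dHom : W'.left ⟶ TopCat.of D.Qs := TopCat.ofHom ⟨D.dmap, D.isQuotientMap_dmap.continuous⟩ with hdHom
  have hcondΦ : dHom ≫ Abar.hom = W'.hom ≫ f := by
    apply TopCat.ext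
    intro w
    rfl
  set Φcat : W'.left ⟶ ((Over.pullback f).obj Abar).left :=
    pullback.lift dHom W'.hom hcondΦ with hΦcat
  have hΦcat_fst : ∀ w, pullback.fst Abar.hom f (Φcat w) = D.dmap w := by
    intro w
    exact ConcreteCategory.congr_hom (pullback.lift_fst dHom W'.hom hcondΦ) w
  have hΦcat_snd : ∀ w, pullback.snd Abar.hom f (Φcat w) = W'.hom w := by
    intro w
    exact ConcreteCategory.congr_hom (pullback.lift_snd dHom W'.hom hcondΦ) w
  have hψΦ : ∀ w, ψ (Φcat w) = w := by
    intro w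
    rw [hψval (Φcat w)]
    apply e.injective
    rw [e.apply_symm_apply]
    apply Subtype.ext
    apply Prod.ext
    · exact hΦcat_fst w
    · exact hΦcat_snd w
  have hΦψ : ∀ ξ, Φcat (ψ ξ) = ξ := by
    intro ξ
    apply pb_ext
    · exact (hΦcat_fst (ψ ξ)).trans (hψ1 ξ)
    · exact (hΦcat_snd (ψ ξ)).trans (hψ2 ξ)
  -- the underlying iso in Over Y
  set liso : ((Over.pullback f).obj Abar).left ≅ W'.left :=
    { hom := ψ, inv := Φcat,
      hom_inv_id := by apply TopCat.ext; intro ξ; exact hΦψ ξ,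
      inv_hom_id := by apply TopCat.ext; intro w; exact hψΦ w } with hliso
  have hoiso : liso.hom ≫ W'.hom = ((Over.pullback f).obj Abar).hom := by
    apply TopCat.ext
    intro ξ
    exact hψ2 ξ
  set oiso : (Over.pullback f).obj Abar ≅ W' := Over.isoMk liso hoiso with hoisodef
  refine ⟨Abar, ⟨Monad.Algebra.isoMk oiso ?_⟩⟩
  -- the algebra compatibility square
  ext1
  apply TopCat.ext
  intro ζ₂
  -- decompose ζ₂
  have hζ₂ := pb_point_eq ((Over.map f).obj ((Over.pullback f).obj Abar)).hom f ζ₂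
  set ξ := pullback.fst ((Over.map f).obj ((Over.pullback f).obj Abar)).hom f ζ₂ with hξ
  set y₂ := pullback.snd ((Over.map f).obj ((Over.pullback f).obj Abar)).hom f ζ₂ with hy₂
  rw [hζ₂]
  set c₂ := pb_cond_apply ((Over.map f).obj ((Over.pullback f).obj Abar)).hom f ζ₂ with hc₂
  -- LHS
  have stepL1 : (((Over.mapPullbackAdj f).toMonad.map oiso.hom).left)
        (pbMk ((Over.map f).obj ((Over.pullback f).obj Abar)).hom f ξ y₂ c₂)
      = pbMk ((Over.map f).obj W').hom f (ψ ξ) y₂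
          ((ConcreteCategory.congr_hom (Over.w ((Over.map f).map oiso.hom)) ξ).trans c₂) :=
    pullback_map_apply f ((Over.map f).map oiso.hom) ξ y₂ c₂
  have stepR1 : (((Monad.comparison (Over.mapPullbackAdj f)).obj Abar).a.left)
        (pbMk ((Over.map f).obj ((Over.pullback f).obj Abar)).hom f ξ y₂ c₂)
      = pbMk Abar.hom f (pullback.fst Abar.hom f ξ) y₂
          (by rw [pb_cond_apply Abar.hom f ξ]; exact c₂) :=
    comparison_a_apply f Abar ξ y₂ c₂
  show S.a.left ((((Over.mapPullbackAdj f).toMonad.map oiso.hom).left)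
        (pbMk ((Over.map f).obj ((Over.pullback f).obj Abar)).hom f ξ y₂ c₂))
      = ψ ((((Monad.comparison (Over.mapPullbackAdj f)).obj Abar).a.left)
        (pbMk ((Over.map f).obj ((Over.pullback f).obj Abar)).hom f ξ y₂ c₂))
  rw [stepL1, stepR1]
  -- now both sides are concrete
  apply e.injective
  apply Subtype.ext
  apply Prod.ext
  · show D.dmap _ = D.dmap _
    have hl : S.a.left (pbMk ((Over.map f).obj W').hom f (ψ ξ) y₂ _)
        = D.θ ⟨(ψ ξ, y₂), (ConcreteCategory.congr_hom (Over.w ((Over.map f).map oiso.hom)) ξ).trans c₂⟩ := rfl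
    rw [hl, D.dmap_theta]
    show D.dmap (ψ ξ) = D.dmap (ψ (pbMk Abar.hom f (pullback.fst Abar.hom f ξ) y₂ _))
    rw [hψ1, hψ1, pbMk_fst]
  · show W'.hom _ = W'.hom _
    have hl : S.a.left (pbMk ((Over.map f).obj W').hom f (ψ ξ) y₂ _)
        = D.θ ⟨(ψ ξ, y₂), (ConcreteCategory.congr_hom (Over.w ((Over.map f).map oiso.hom)) ξ).trans c₂⟩ := rfl
    rw [hl]
    rw [D.hp ⟨(ψ ξ, y₂), (ConcreteCategory.congr_hom (Over.w ((Over.map f).map oiso.hom)) ξ).trans c₂⟩]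
    show y₂ = W'.hom (ψ (pbMk Abar.hom f (pullback.fst Abar.hom f ξ) y₂ _))
    rw [hψ2, pbMk_snd]

end CategoryGlue

/-- Proper surjections of topological spaces are effective descent morphisms:
the pullback functor `Over X ⥤ Over Y` is monadic. -/
theorem properSurjection_effectiveDescent
    {Y X : TopCat} (f : Y ⟶ X)
    (hsurj : Function.Surjective f) (hproper : IsProperMap f) :
    Nonempty (MonadicRightAdjoint (Over.pullback f)) := by
  haveI : (Over.pullback f).Faithful := overPullback_faithful f hsurj
  exact ⟨{ L := Over.map f, adj := Over.mapPullbackAdj f,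
           eqv := { faithful := inferInstance,
                    full := comparison_full f hproper hsurj,
                    essSurj := comparison_essSurj f hproper } }⟩
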